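/- Let X be a real vector space. For every u ∈ X, the point (u, u ⊗ u) is an extreme point of the convex hull of the diagonal {(v, v ⊗ v) : v ∈ X} inside the real vector space X × (X ⊗[ℝ] X). -/

import Mathlib

open scoped TensorProduct

section Aux

variable {X : Type*} [AddCommGroup X] [Module ℝ X]

/-- The bilinear functional `a ⊗ b ↦ f a * f b` on `X ⊗ X`. -/
noncomputable def diagAuxB (f : Module.Dual ℝ X) : X ⊗[ℝ] X →ₗ[ℝ] ℝ :=
  TensorProduct.lift ((LinearMap.mul ℝ ℝ).compl₁₂ f f)

@[simp] lemma diagAuxB_tmul (f : Module.Dual ℝ X) (a b : X) :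
    diagAuxB f (a ⊗ₜ[ℝ] b) = f a * f b := by
  simp [diagAuxB]

/-- The linear part of the affine functional `p ↦ B_f p.2 - 2 f u * f p.1 + f u ^ 2`. -/
noncomputable def diagAuxL (u : X) (f : Module.Dual ℝ X) : (X × (X ⊗[ℝ] X)) →ₗ[ℝ] ℝ :=
  diagAuxB f ∘ₗ LinearMap.snd ℝ X (X ⊗[ℝ] X)
    - (2 * f u) • (f ∘ₗ LinearMap.fst ℝ X (X ⊗[ℝ] X))

lemma diagAuxL_apply (u : X) (f : Module.Dual ℝ X) (p : X × (X ⊗[ℝ] X)) :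
    diagAuxL u f p = diagAuxB f p.2 - 2 * f u * f p.1 := by
  simp only [diagAuxL, LinearMap.sub_apply, LinearMap.coe_comp, Function.comp_apply,
    LinearMap.snd_apply, LinearMap.smul_apply, LinearMap.fst_apply, smul_eq_mul]

lemma diagAuxL_diag (u : X) (f : Module.Dual ℝ X) (v : X) :
    diagAuxL u f (v, v ⊗ₜ[ℝ] v) + f u ^ 2 = (f v - f u) ^ 2 := by
  rw [diagAuxL_apply]
  simp only [diagAuxB_tmul]
  ring

/-- Key step: any element of the convex hull of the diagonal on which every affine
functional `p ↦ B_f p.2 - 2 f u * f p.1 + f u ^ 2` vanishes must be `(u, u ⊗ u)`. -/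
lemma diag_hull_eq (u : X) (y : X × (X ⊗[ℝ] X))
    (hy : y ∈ convexHull ℝ {p : X × (X ⊗[ℝ] X) | ∃ v : X, p = (v, v ⊗ₜ[ℝ] v)})
    (h0 : ∀ f : Module.Dual ℝ X, diagAuxL u f y + f u ^ 2 = 0) :
    y = (u, u ⊗ₜ[ℝ] u) := by
  rw [convexHull_eq] at hy
  obtain ⟨ι, t, w, z, hw0, hw1, hzs, hyc⟩ := hy
  rw [Finset.centerMass_eq_of_sum_1 _ _ hw1] at hyc
  have key : ∀ i ∈ t, w i ≠ 0 → z i = (u, u ⊗ₜ[ℝ] u) := by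
    intro i hi hwi
    obtain ⟨v, hv⟩ := hzs i hi
    have hterm : ∀ f : Module.Dual ℝ X, ∀ j ∈ t, w j * (diagAuxL u f (z j) + f u ^ 2) = 0 := by
      intro f
      rw [← Finset.sum_eq_zero_iff_of_nonneg ?nonneg]
      case nonneg =>
        intro j hj
        obtain ⟨v', hv'⟩ := hzs j hj
        rw [hv', diagAuxL_diag]
        exact mul_nonneg (hw0 j hj) (sq_nonneg _)
      · have h := h0 f
        rw [← hyc, map_sum] at h
        calc ∑ j ∈ t, w j * (diagAuxL u f (z j) + f u ^ 2)
            = ∑ j ∈ t, diagAuxL u f (w j • z j) + (∑ j ∈ t, w j) * f u ^ 2 := by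
              rw [Finset.sum_mul, ← Finset.sum_add_distrib]
              refine Finset.sum_congr rfl fun j hj => ?_
              rw [map_smul]
              simp [mul_add]
          _ = 0 := by rw [hw1, one_mul]; linarith [h]
    have hvu : v - u = 0 := by
      rw [← Module.forall_dual_apply_eq_zero_iff ℝ]
      intro f
      have := hterm f i hi
      rw [hv, diagAuxL_diag] at this
      have h2 : (f v - f u) ^ 2 = 0 := by
        rcases mul_eq_zero.mp this with h | h
        · exact absurd h hwi
        · exact h
      have := pow_eq_zero_iff (n := 2) (by norm_num) |>.mp h2
      simp [map_sub]
      linarith [this]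
    have : v = u := by rwa [sub_eq_zero] at hvu
    rw [hv, this]
  have : ∑ i ∈ t, w i • z i = ∑ i ∈ t, w i • ((u, u ⊗ₜ[ℝ] u) : X × (X ⊗[ℝ] X)) := by
    refine Finset.sum_congr rfl fun i hi => ?_
    by_cases h : w i = 0
    · simp [h]
    · rw [key i hi h]
  rw [← hyc, this, ← Finset.sum_smul, hw1, one_smul]

end Aux

/-- **Extreme points of the convex hull of the diagonal.**
For a real vector space `X`, each point `(u, u ⊗ u)` is an extreme point of the convex
hull of the diagonal `{(v, v ⊗ v) : v ∈ X}` inside `X × (X ⊗[ℝ] X)`. -/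
theorem diagonal_mem_extremePoints_convexHull
    {X : Type*} [AddCommGroup X] [Module ℝ X] (u : X) :
    (u, u ⊗ₜ[ℝ] u) ∈ Set.extremePoints ℝ
      (convexHull ℝ {p : X × (X ⊗[ℝ] X) | ∃ v : X, p = (v, v ⊗ₜ[ℝ] v)}) := by
  set s : Set (X × (X ⊗[ℝ] X)) := {p | ∃ v : X, p = (v, v ⊗ₜ[ℝ] v)} with hs
  refine ⟨subset_convexHull ℝ s ⟨u, rfl⟩, ?_⟩
  intro y hy z hz hseg
  obtain ⟨a, b, ha, hb, hab, hx⟩ := hseg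
  -- Nonnegativity of the affine functionals on the convex hull.
  have hnn : ∀ f : Module.Dual ℝ X, ∀ p ∈ convexHull ℝ s, 0 ≤ diagAuxL u f p + f u ^ 2 := by
    intro f p hp
    have hconv : Convex ℝ {q : X × (X ⊗[ℝ] X) | -(f u ^ 2) ≤ diagAuxL u f q} :=
      convex_halfSpace_ge (diagAuxL u f).isLinear _
    have hsub : s ⊆ {q | -(f u ^ 2) ≤ diagAuxL u f q} := by
      rintro q ⟨v, rfl⟩
      have := diagAuxL_diag u f v
      have h2 := sq_nonneg (f v - f u)
      simp only [Set.mem_setOf_eq]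
      linarith
    have h := convexHull_min hsub hconv hp
    simp only [Set.mem_setOf_eq] at h
    linarith
  -- The functional vanishes at `(u, u ⊗ u)`.
  have h0 : ∀ f : Module.Dual ℝ X, diagAuxL u f (u, u ⊗ₜ[ℝ] u) + f u ^ 2 = 0 := by
    intro f
    rw [diagAuxL_diag]
    simp
  -- Hence it vanishes at `y` and at `z`.
  have hvanish : ∀ f : Module.Dual ℝ X,
      diagAuxL u f y + f u ^ 2 = 0 ∧ diagAuxL u f z + f u ^ 2 = 0 := by
    intro f
    have h1 := hnn f y hy
    have h2 := hnn f z hz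
    have h3 : a * (diagAuxL u f y + f u ^ 2) + b * (diagAuxL u f z + f u ^ 2) = 0 := by
      have h := h0 f
      rw [← hx, map_add, map_smul, map_smul] at h
      have : a * diagAuxL u f y + b * diagAuxL u f z + f u ^ 2 = 0 := h
      nlinarith [hab]
    constructor <;> nlinarith
  exact diag_hull_eq u y hy fun f => (hvanish f).1
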